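/- Let H be a Hilbert space and A, Λ bounded linear maps with AΛ = Id − K where K is compact and ‖Kf‖ < ‖f‖ for all f ≠ 0. Then Λ has a bounded left inverse given by B = (∑_{m=0}^∞ K^m) ∘ A, i.e., BΛ = Id. -/

import Mathlib

/-- If `AΛ = Id - K` with `K` compact and `‖Kf‖ < ‖f‖` for `f ≠ 0`, then
`B = (∑ K^m) ∘ A` is a bounded left inverse of `Λ`. -/
theorem stmt2 {H H' : Type*} [NormedAddCommGroup H] [InnerProductSpace ℝ H] [CompleteSpace H]
    [NormedAddCommGroup H'] [InnerProductSpace ℝ H'] [CompleteSpace H']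
    (Λ : H →L[ℝ] H') (A : H' →L[ℝ] H) (K : H →L[ℝ] H)
    (hK : IsCompactOperator K) (hstrict : ∀ f : H, f ≠ 0 → ‖K f‖ < ‖f‖)
    (hAΛ : A.comp Λ = 1 - K) :
    ∃ S : H →L[ℝ] H, HasSum (fun m : ℕ => K ^ m) S ∧ (S.comp A).comp Λ = 1 := by
  -- `‖K f‖ ≤ ‖f‖` for every `f`
  have hKle : ∀ f : H, ‖K f‖ ≤ ‖f‖ := by
    intro f
    by_cases hf : f = 0
    · simp [hf]
    · exact (hstrict f hf).le
  have hK1 : ‖K‖ ≤ 1 := K.opNorm_le_bound zero_le_one (fun f => by simpa using hKle f)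
  -- norms of powers
  have hpow : ∀ (T : H →L[ℝ] H) (n : ℕ), ‖T ^ n‖ ≤ ‖T‖ ^ n := by
    intro T n
    induction n with
    | zero =>
      simpa [ContinuousLinearMap.one_def] using ContinuousLinearMap.norm_id_le (𝕜 := ℝ) (E := H)
    | succ n ih =>
      calc ‖T ^ (n + 1)‖ = ‖T ^ n * T‖ := by rw [pow_succ]
        _ ≤ ‖T ^ n‖ * ‖T‖ := norm_mul_le _ _
        _ ≤ ‖T‖ ^ n * ‖T‖ := by
            exact mul_le_mul_of_nonneg_right ih (norm_nonneg _)
        _ = ‖T‖ ^ (n + 1) := by rw [pow_succ]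
  -- key point: `‖K ^ 2‖ < 1` from compactness
  have hr : ‖K ^ 2‖ < 1 := by
    by_contra hcon
    push_neg at hcon
    have hseq : ∀ n : ℕ, ∃ f : H, ‖f‖ < 1 ∧ 1 - 1 / ((n : ℝ) + 1) < ‖(K ^ 2) f‖ := by
      intro n
      apply (K ^ 2).exists_lt_apply_of_lt_opNorm
      have h0 : (0 : ℝ) < 1 / ((n : ℝ) + 1) := by positivity
      linarith
    choose f hf1 hf2 using hseq
    have hcompact : IsCompact (closure (K '' Metric.closedBall 0 1)) :=
      hK.isCompact_closure_image_closedBall (𝕜₁ := ℝ) 1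
    have hmem : ∀ n, K (f n) ∈ closure (K '' Metric.closedBall 0 1) := by
      intro n
      exact subset_closure ⟨f n, by simpa [Metric.mem_closedBall] using (hf1 n).le, rfl⟩
    obtain ⟨g, hgmem, φ, hφ, htend⟩ := hcompact.tendsto_subseq hmem
    have h1 : Filter.Tendsto (fun n => K (K (f (φ n)))) Filter.atTop (nhds (K g)) :=
      (K.continuous.tendsto g).comp htend
    -- `1 ≤ ‖K g‖`
    have hKg1 : 1 ≤ ‖K g‖ := by
      have hlim1 : Filter.Tendsto (fun n : ℕ => 1 - 1 / ((n : ℝ) + 1)) Filter.atTop (nhds 1) := by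
        simpa using tendsto_const_nhds.sub (tendsto_one_div_add_atTop_nhds_zero_nat (𝕜 := ℝ))
      refine le_of_tendsto_of_tendsto' hlim1 h1.norm ?_
      intro n
      have h2 : 1 - 1 / ((φ n : ℝ) + 1) < ‖(K ^ 2) (f (φ n))‖ := hf2 (φ n)
      have h3 : (K ^ 2) (f (φ n)) = K (K (f (φ n))) := by
        simp [pow_two, ContinuousLinearMap.mul_apply]
      have h4 : 1 / ((φ n : ℝ) + 1) ≤ 1 / ((n : ℝ) + 1) := by
        apply one_div_le_one_div_of_le (by positivity)
        have h5 : n ≤ φ n := hφ.le_apply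
        have h6 : (n : ℝ) ≤ (φ n : ℝ) := Nat.cast_le.2 h5
        linarith
      rw [h3] at h2
      linarith
    -- `‖g‖ ≤ 1`
    have hg1 : ‖g‖ ≤ 1 := by
      refine le_of_tendsto' htend.norm ?_
      intro n
      exact (hKle (f (φ n))).trans (hf1 (φ n)).le
    have hg0 : g ≠ 0 := by
      intro h
      rw [h] at hKg1
      simp at hKg1
      linarith
    have := hstrict g hg0
    linarith
  set r := ‖K ^ 2‖ with hrdef
  have hr0 : (0 : ℝ) ≤ r := norm_nonneg _
  -- bound on powers
  have hbound : ∀ m : ℕ, ‖K ^ m‖ ≤ r ^ (m / 2) := by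
    intro m
    have hsplit : K ^ m = (K ^ 2) ^ (m / 2) * K ^ (m % 2) := by
      rw [← pow_mul, ← pow_add]
      congr 1
      omega
    have h1 : ‖(K ^ 2) ^ (m / 2)‖ ≤ r ^ (m / 2) := hpow _ _
    have h2 : ‖K ^ (m % 2)‖ ≤ 1 := by
      rcases Nat.mod_two_eq_zero_or_one m with h | h <;> rw [h]
      · simpa [ContinuousLinearMap.one_def] using
          ContinuousLinearMap.norm_id_le (𝕜 := ℝ) (E := H)
      · simpa using hK1
    calc ‖K ^ m‖ = ‖(K ^ 2) ^ (m / 2) * K ^ (m % 2)‖ := by rw [← hsplit]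
      _ ≤ ‖(K ^ 2) ^ (m / 2)‖ * ‖K ^ (m % 2)‖ := norm_mul_le _ _
      _ ≤ r ^ (m / 2) * 1 := mul_le_mul h1 h2 (norm_nonneg _) (by positivity)
      _ = r ^ (m / 2) := mul_one _
  -- summability of norms
  have hdouble : ∀ n : ℕ, ∑ i ∈ Finset.range (2 * n), r ^ (i / 2)
      = 2 * ∑ k ∈ Finset.range n, r ^ k := by
    intro n
    induction n with
    | zero => simp
    | succ n ih =>
      have h2 : 2 * (n + 1) = (2 * n + 1) + 1 := by ring
      rw [h2, Finset.sum_range_succ, Finset.sum_range_succ, ih, Finset.sum_range_succ]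
      have e1 : (2 * n) / 2 = n := by omega
      have e2 : (2 * n + 1) / 2 = n := by omega
      rw [e1, e2]
      ring
  have hsum : Summable (fun m : ℕ => ‖K ^ m‖) := by
    apply summable_of_sum_range_le (c := 2 * (1 - r)⁻¹) (fun n => norm_nonneg _)
    intro n
    calc ∑ i ∈ Finset.range n, ‖K ^ i‖
        ≤ ∑ i ∈ Finset.range n, r ^ (i / 2) :=
          Finset.sum_le_sum fun i _ => hbound i
      _ ≤ ∑ i ∈ Finset.range (2 * n), r ^ (i / 2) := by
          apply Finset.sum_le_sum_of_subset_of_nonneg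
          · exact Finset.range_subset_range.2 (by omega)
          · intro i _ _
            positivity
      _ = 2 * ∑ k ∈ Finset.range n, r ^ k := hdouble n
      _ ≤ 2 * (1 - r)⁻¹ := by
          have h1 : ∑ k ∈ Finset.range n, r ^ k ≤ ∑' k : ℕ, r ^ k :=
            (summable_geometric_of_lt_one hr0 hr).sum_le_tsum _ (fun i _ => by positivity)
          rw [tsum_geometric_of_lt_one hr0 hr] at h1
          linarith
  obtain ⟨S, hS⟩ : Summable (fun m : ℕ => K ^ m) := hsum.of_norm
  refine ⟨S, hS, ?_⟩
  -- shifted sum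
  have hshift : HasSum (fun m : ℕ => K ^ (m + 1)) (S - 1) := by
    refine (hasSum_nat_add_iff 1).2 ?_
    simpa using hS
  have htel : HasSum (fun m : ℕ => K ^ m - K ^ (m + 1)) 1 := by
    have := hS.sub hshift
    simpa using this
  have hmul : HasSum (fun m : ℕ => K ^ m * (1 - K)) (S * (1 - K)) := hS.mul_right _
  have key : S * (1 - K) = 1 := by
    have heq : (fun m : ℕ => K ^ m * (1 - K)) = fun m : ℕ => K ^ m - K ^ (m + 1) := by
      funext m
      rw [mul_sub, mul_one, pow_succ]
    rw [heq] at hmul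
    exact hmul.unique htel
  rw [ContinuousLinearMap.comp_assoc, hAΛ]
  exact key
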